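/- Every nonnegative univariate polynomial with real coefficients is a sum of two squares of polynomials in ℝ[x]. -/

import Mathlib

open Polynomial

theorem nonneg_real_poly_sum_two_squares (f : Polynomial ℝ)
    (hf : ∀ x : ℝ, 0 ≤ f.eval x) :
    ∃ a b : Polynomial ℝ, f = a ^ 2 + b ^ 2 := by
  generalize hd : f.natDegree = n
  induction n using Nat.strong_induction_on generalizing f with
  | _ n ih =>
  by_cases hf0 : f = 0
  · exact ⟨0, 0, by simp [hf0]⟩
  by_cases hn0 : f.natDegree = 0
  · obtain ⟨c, rfl⟩ : ∃ c, f = C c := ⟨f.coeff 0, (Polynomial.eq_C_of_natDegree_eq_zero hn0)⟩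
    have hc : 0 ≤ c := by simpa using hf 0
    exact ⟨C (Real.sqrt c), 0, by
      rw [← C_pow, Real.sq_sqrt hc]; ring⟩
  -- f has positive degree, so it has a complex root z
  have hdegpos : 0 < f.degree := natDegree_pos_iff_degree_pos.mp (Nat.pos_of_ne_zero hn0)
  obtain ⟨z, hz⟩ : ∃ z : ℂ, aeval z f = 0 :=
    IsAlgClosed.exists_aeval_eq_zero ℂ f hdegpos.ne'
  by_cases him : z.im = 0
  · -- real root r := z.re
    set r := z.re with hr
    have hzr : z = (r : ℂ) := by
      exact Complex.ext rfl (by simpa using him)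
    have hroot : f.eval r = 0 := by
      have h2 : algebraMap ℝ ℂ (f.eval r) = 0 := by
        rw [← Polynomial.aeval_algebraMap_apply_eq_algebraMap_eval,
          Complex.coe_algebraMap, ← hzr, hz]
      simpa using h2
    -- r is a global minimum, so the derivative vanishes
    have hderiv : f.derivative.eval r = 0 := by
      have hmin : IsLocalMin (fun x => f.eval x) r := by
        apply IsMinOn.isLocalMin (s := Set.univ) _ (by simp)
        intro x _
        simpa [hroot] using hf x
      have := hmin.deriv_eq_zero
      rwa [Polynomial.deriv] at this
    have hdvd : (X - C r) ^ 2 ∣ f := by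
      rw [← Polynomial.le_rootMultiplicity_iff hf0]
      exact (Polynomial.one_lt_rootMultiplicity_iff_isRoot hf0).mpr ⟨hroot, hderiv⟩
    obtain ⟨g, hg⟩ := hdvd
    have hgne : g ≠ 0 := by rintro rfl; simp [hg] at hf0
    have hXr : (X - C r) ≠ (0 : ℝ[X]) := X_sub_C_ne_zero r
    have hdeg : g.natDegree < n := by
      have : f.natDegree = 2 + g.natDegree := by
        rw [hg, natDegree_mul (pow_ne_zero _ hXr) hgne, natDegree_pow, natDegree_X_sub_C]
      omega
    have hgnonneg : ∀ x : ℝ, 0 ≤ g.eval x := by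
      intro x
      rcases eq_or_ne x r with heq | hxr
      · -- limit argument
        by_contra hlt
        push_neg at hlt
        have hcont : ContinuousAt (fun y => g.eval y) x := g.continuousAt
        have hev : ∀ᶠ y in nhds x, g.eval y < 0 :=
          hcont.eventually_lt continuousAt_const hlt
        have hne : ∀ᶠ y in nhdsWithin x {x}ᶜ, g.eval y < 0 :=
          hev.filter_mono nhdsWithin_le_nhds
        obtain ⟨y, hy, hyx⟩ := (hne.and eventually_mem_nhdsWithin).exists
        have hfx : 0 ≤ (y - r) ^ 2 * g.eval y := by
          have := hf y
          rwa [hg, eval_mul, eval_pow, eval_sub, eval_X, eval_C] at this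
        have hpos : 0 < (y - r) ^ 2 := by
          have : y - r ≠ 0 := sub_ne_zero.mpr (heq ▸ hyx)
          positivity
        nlinarith
      · have hfx := hf x
        rw [hg, eval_mul, eval_pow, eval_sub, eval_X, eval_C] at hfx
        have hpos : 0 < (x - r) ^ 2 := by
          have : x - r ≠ 0 := sub_ne_zero.mpr hxr
          positivity
        exact (mul_nonneg_iff_of_pos_left hpos).mp hfx
    obtain ⟨a, b, hab⟩ := ih g.natDegree hdeg g hgnonneg rfl
    exact ⟨(X - C r) * a, (X - C r) * b, by rw [hg, hab]; ring⟩
  · -- non-real root: quadratic factor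
    have hdvd := Polynomial.quadratic_dvd_of_aeval_eq_zero_im_ne_zero f hz him
    obtain ⟨g, hg⟩ := hdvd
    set q : ℝ[X] := X ^ 2 - C (2 * z.re) * X + C (‖z‖ ^ 2) with hq
    have hqsq : q = (X - C z.re) ^ 2 + (C z.im) ^ 2 := by
      have hnorm : ‖z‖ ^ 2 = z.re ^ 2 + z.im ^ 2 := by
        rw [Complex.sq_norm, Complex.normSq_apply]; ring
      rw [hq, hnorm]
      simp only [C_add, C_mul, C_pow, map_ofNat]
      ring
    have hqeval : ∀ x : ℝ, 0 < q.eval x := by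
      intro x
      rw [hqsq]
      simp only [eval_add, eval_pow, eval_sub, eval_X, eval_C]
      have : z.im ^ 2 > 0 := by positivity
      nlinarith [sq_nonneg (x - z.re)]
    have hqne : q ≠ 0 := fun h => by simpa [h] using hqeval 0
    have hgne : g ≠ 0 := by rintro rfl; simp [hg] at hf0
    have hqdeg : q.natDegree = 2 := by
      rw [hq]; compute_degree!
    have hdeg : g.natDegree < n := by
      have : f.natDegree = 2 + g.natDegree := by
        rw [hg, natDegree_mul hqne hgne, hqdeg]
      omega
    have hgnonneg : ∀ x : ℝ, 0 ≤ g.eval x := by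
      intro x
      have hfx := hf x
      rw [hg, eval_mul] at hfx
      exact (mul_nonneg_iff_of_pos_left (hqeval x)).mp hfx
    obtain ⟨a, b, hab⟩ := ih g.natDegree hdeg g hgnonneg rfl
    refine ⟨(X - C z.re) * a - C z.im * b, (X - C z.re) * b + C z.im * a, ?_⟩
    rw [hg, hab, hqsq]; ring
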